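/- Let V be a countable index set, let H(x) be a finite-dimensional complex Hilbert space for each x ∈ V, let H = ⊕_{x∈V} H(x) be their Hilbert space (ℓ²-) direct sum, and let P_x ∈ B(H) denote the orthogonal projection onto the summand H(x). Let {A_k}_{k∈K} be a countable family of bounded operators on H such that each A_k satisfies A_k = P_{y_k} A_k P_{x_k} for some vertices x_k, y_k ∈ V, and let 𝔄 be the C*-subalgebra of B(H) generated by {P_x : x ∈ V} ∪ {A_k : k ∈ K}. Then 𝔄 is an AF-algebra: there exists an increasing sequence B₀ ⊆ B₁ ⊆ B₂ ⊆ ⋯ of finite-dimensional *-subalgebras of B(H), each contained in 𝔄, whose union is dense in 𝔄 in the operator norm. -/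

import Mathlib

/-- The orthogonal projection of the Hilbert space direct sum `lp H 2` onto the
summand `H x`. -/
noncomputable def lpProj {V : Type*} [DecidableEq V] (H : V → Type*)
    [∀ x, NormedAddCommGroup (H x)] [∀ x, InnerProductSpace ℂ (H x)] (x : V) :
    lp H 2 →L[ℂ] lp H 2 :=
  LinearMap.mkContinuous
    { toFun := fun f => lp.single 2 x (f x)
      map_add' := fun f g => by
        apply lp.ext
        funext j
        by_cases h : j = x
        · subst h
          simp [lp.single_apply_self, lp.coeFn_add]
        · simp [lp.single_apply_ne 2 x _ h, lp.coeFn_add]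
      map_smul' := fun c f => by
        apply lp.ext
        funext j
        by_cases h : j = x
        · subst h
          simp [lp.single_apply_self, lp.coeFn_smul]
        · simp [lp.single_apply_ne 2 x _ h, lp.coeFn_smul] }
    1
    (fun f => by
      have h1 : ‖lp.single 2 x (f x)‖ = ‖f x‖ := lp.norm_single (by norm_num) x (f x)
      have h2 : ‖f x‖ ≤ ‖f‖ := lp.norm_apply_le_norm (by norm_num) f x
      simpa [h1] using h2)


section lemmas
variable {V : Type*} [DecidableEq V] (H : V → Type*)
    [∀ x, NormedAddCommGroup (H x)] [∀ x, InnerProductSpace ℂ (H x)]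

lemma lpProj_apply (v : V) (f : lp H 2) : lpProj H v f = lp.single 2 v (f v) := rfl

omit [(x : V) → InnerProductSpace ℂ (H x)] in
lemma lp_single_zero (v : V) : lp.single 2 v (0 : H v) = (0 : lp H 2) := by
  apply lp.ext
  funext j
  by_cases h : j = v
  · subst h; simp [lp.single_apply_self]
  · simp [lp.single_apply_ne 2 v _ h]

lemma lpProj_mul_self (v : V) : lpProj H v * lpProj H v = lpProj H v := by
  ext f
  simp [ContinuousLinearMap.mul_apply, lpProj_apply, lp.single_apply_self]

lemma lpProj_mul_ne {v w : V} (h : v ≠ w) : lpProj H v * lpProj H w = 0 := by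
  ext f
  simp [ContinuousLinearMap.mul_apply, lpProj_apply,
    lp.single_apply_ne 2 w _ h, lp_single_zero, Pi.single_apply, h]

lemma lpProj_star [∀ x, FiniteDimensional ℂ (H x)] (v : V) :
    star (lpProj H v) = lpProj H v := by
  rw [ContinuousLinearMap.star_eq_adjoint]
  symm
  rw [ContinuousLinearMap.eq_adjoint_iff]
  intro f g
  rw [lpProj_apply, lpProj_apply, lp.inner_single_left, lp.inner_single_right]

/-- `lp.single` as a linear map. -/
noncomputable def lpSingleL (v : V) : H v →ₗ[ℂ] lp H 2 where
  toFun a := lp.single 2 v a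
  map_add' a b := by
    apply lp.ext
    funext j
    by_cases h : j = v
    · subst h; simp [lp.single_apply_self, lp.coeFn_add]
    · simp [lp.single_apply_ne 2 v _ h, lp.coeFn_add]
  map_smul' c a := by simp

end lemmas

/-- The set of elements `T` with `Q * T * Q = T`, as a non-unital star subalgebra. -/
def cornerAlg {A : Type*} [NonUnitalRing A] [Module ℂ A] [SMulCommClass ℂ A A]
    [IsScalarTower ℂ A A] [StarRing A] [StarModule ℂ A]
    (Q : A) (hQ : Q * Q = Q) (hs : star Q = Q) : NonUnitalStarSubalgebra ℂ A where
  carrier := {T | Q * T * Q = T}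
  zero_mem' := by simp
  add_mem' := by
    intro a b ha hb
    simp only [Set.mem_setOf_eq] at *
    rw [mul_add, add_mul, ha, hb]
  mul_mem' := by
    intro a b ha hb
    simp only [Set.mem_setOf_eq] at *
    have ha' : Q * a = a := by
      calc Q * a = Q * (Q * a * Q) := by rw [ha]
      _ = Q * Q * a * Q := by noncomm_ring
      _ = Q * a * Q := by rw [hQ]
      _ = a := ha
    have hb' : b * Q = b := by
      calc b * Q = Q * b * Q * Q := by rw [hb]
      _ = Q * b * (Q * Q) := by noncomm_ring
      _ = Q * b * Q := by rw [hQ]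
      _ = b := hb
    calc Q * (a * b) * Q = (Q * a) * (b * Q) := by noncomm_ring
    _ = a * b := by rw [ha', hb']
  smul_mem' := by
    intro c a ha
    simp only [Set.mem_setOf_eq] at *
    rw [mul_smul_comm, smul_mul_assoc, ha]
  star_mem' := by
    intro a ha
    simp only [Set.mem_setOf_eq] at *
    have h2 : Q * star a * Q = star (Q * a * Q) := by
      rw [star_mul, star_mul, hs, mul_assoc]
    rw [h2, ha]

lemma mem_cornerAlg_iff {A : Type*} [NonUnitalRing A] [Module ℂ A] [SMulCommClass ℂ A A]
    [IsScalarTower ℂ A A] [StarRing A] [StarModule ℂ A]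
    {Q : A} {hQ : Q * Q = Q} {hs : star Q = Q} {T : A} :
    T ∈ cornerAlg Q hQ hs ↔ Q * T * Q = T := Iff.rfl

/-- Operators compressed by an idempotent with finite-dimensional "range bound" form a
finite-dimensional space. -/
lemma finiteDimensional_of_corner {E : Type*} [NormedAddCommGroup E] [NormedSpace ℂ E]
    (Q : E →L[ℂ] E) (W : Submodule ℂ E) [FiniteDimensional ℂ W]
    (hr : ∀ f, Q f ∈ W) (S : Submodule ℂ (E →L[ℂ] E))
    (hS : ∀ T ∈ S, Q * T * Q = T) : FiniteDimensional ℂ S := by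
  have mem : ∀ T : E →L[ℂ] E, T ∈ S → ∀ w : W, T (w : E) ∈ W := by
    intro T hT w
    have h := hS T hT
    have : T (w : E) = Q (T (Q (w : E))) := by
      conv_lhs => rw [← h]
      simp [ContinuousLinearMap.mul_apply]
    rw [this]
    exact hr _
  let Ψ : S →ₗ[ℂ] (W →ₗ[ℂ] W) :=
    { toFun := fun T => LinearMap.codRestrict W
        (((T : E →L[ℂ] E).toLinearMap).comp W.subtype) (fun w => mem T T.2 w)
      map_add' := by intro a b; ext w; rfl
      map_smul' := by intro c a; ext w; rfl }
  have hinj : Function.Injective Ψ := by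
    intro a b hab
    ext f
    have key : ∀ T : S, Ψ T = 0 → (T : E →L[ℂ] E) = 0 := by
      intro T hT0
      ext g
      have h := hS T T.2
      have h1 : (T : E →L[ℂ] E) g = Q ((T : E →L[ℂ] E) (Q g)) := by
        conv_lhs => rw [← h]
        simp [ContinuousLinearMap.mul_apply]
      have h2' : (Ψ T) ⟨Q g, hr g⟩ = 0 := by rw [hT0]; rfl
      have h2 : (T : E →L[ℂ] E) (Q g) = 0 := by
        have := Subtype.ext_iff.mp h2'
        simpa [Ψ, LinearMap.codRestrict] using this
      rw [h1, h2, map_zero]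
      rfl
    have : Ψ (a - b) = 0 := by rw [map_sub, hab, sub_self]
    have := key (a - b) this
    have h3 : ((a : E →L[ℂ] E) - b) f = (0 : E →L[ℂ] E) f := by
      rw [← this]; rfl
    simpa [sub_eq_zero] using h3
  exact FiniteDimensional.of_injective Ψ hinj

set_option maxHeartbeats 1000000 in
open NonUnitalStarAlgebra in
/-- The C*-algebra of a quantum causal history (generated by the vertex
projections and edge Kraus operators, each supported between two finite-dimensional vertex
summands) is an AF-algebra: it is the closure of an increasing union of finite-dimensional
*-subalgebras contained in it. -/
theorem qch_algebra_is_AF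
    {V : Type*} [Countable V] [DecidableEq V]
    (H : V → Type*) [∀ x, NormedAddCommGroup (H x)] [∀ x, InnerProductSpace ℂ (H x)]
    [∀ x, FiniteDimensional ℂ (H x)]
    {K : Type*} [Countable K]
    (A : K → (lp H 2 →L[ℂ] lp H 2)) (x y : K → V)
    (hA : ∀ k, A k = lpProj H (y k) * A k * lpProj H (x k))
    (𝔄 : NonUnitalStarSubalgebra ℂ (lp H 2 →L[ℂ] lp H 2))
    (h𝔄 : 𝔄 = (NonUnitalStarAlgebra.adjoin ℂ
        (Set.range (lpProj H) ∪ Set.range A)).topologicalClosure) :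
    ∃ B : ℕ → NonUnitalStarSubalgebra ℂ (lp H 2 →L[ℂ] lp H 2),
      Monotone B ∧
      (∀ n, FiniteDimensional ℂ (B n)) ∧
      (∀ n, (B n : Set (lp H 2 →L[ℂ] lp H 2)) ⊆ 𝔄) ∧
      closure (⋃ n, (B n : Set (lp H 2 →L[ℂ] lp H 2))) =
        (𝔄 : Set (lp H 2 →L[ℂ] lp H 2)) := by
  classical
  obtain ⟨e, he⟩ := Countable.exists_injective_nat (V ⊕ K)
  set g : V ⊕ K → (lp H 2 →L[ℂ] lp H 2) := Sum.elim (lpProj H) A with hg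
  have hrange : Set.range g = Set.range (lpProj H) ∪ Set.range A := Set.Sum.elim_range _ _
  -- finite index sets
  let F : ℕ → Finset (V ⊕ K) := fun n =>
    Set.Finite.toFinset ((Set.finite_Iic n).preimage he.injOn)
  have hF : ∀ n i, i ∈ F n ↔ e i ≤ n := by
    intro n i
    simp [F, Set.Finite.mem_toFinset]
  have hFmono : ∀ {m n}, m ≤ n → F m ⊆ F n := by
    intro m n h i hi
    rw [hF] at *
    exact le_trans hi h
  -- finite vertex sets
  let Φ : ℕ → Finset V := fun n =>
    (F n).biUnion (Sum.elim (fun v => {v}) (fun k => {x k, y k}))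
  -- the finite-rank projections
  let Q : ℕ → (lp H 2 →L[ℂ] lp H 2) := fun n => ∑ v ∈ Φ n, lpProj H v
  have hQdef : ∀ n, Q n = ∑ v ∈ Φ n, lpProj H v := fun n => rfl
  have hQl : ∀ n v, v ∈ Φ n → Q n * lpProj H v = lpProj H v := by
    intro n v hv
    rw [hQdef, Finset.sum_mul]
    rw [Finset.sum_eq_single_of_mem v hv]
    · exact lpProj_mul_self H v
    · intro w hw hne
      exact lpProj_mul_ne H hne
  have hQr : ∀ n v, v ∈ Φ n → lpProj H v * Q n = lpProj H v := by
    intro n v hv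
    rw [hQdef, Finset.mul_sum]
    rw [Finset.sum_eq_single_of_mem v hv]
    · exact lpProj_mul_self H v
    · intro w hw hne
      exact lpProj_mul_ne H (Ne.symm hne)
  have hQQ : ∀ n, Q n * Q n = Q n := by
    intro n
    conv_lhs => rw [hQdef]
    conv_rhs => rw [hQdef]
    rw [Finset.mul_sum]
    exact Finset.sum_congr rfl fun v hv => hQl n v hv
  have hQs : ∀ n, star (Q n) = Q n := by
    intro n
    rw [hQdef, star_sum]
    exact Finset.sum_congr rfl fun v _ => lpProj_star H v
  -- each generator indexed by `F n` lies in the corner of `Q n`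
  have hgen : ∀ n i, i ∈ F n → Q n * g i * Q n = g i := by
    intro n i hi
    cases i with
    | inl v =>
      have hv : v ∈ Φ n := Finset.mem_biUnion.2 ⟨Sum.inl v, hi, by simp⟩
      show Q n * lpProj H v * Q n = lpProj H v
      rw [hQl n v hv, hQr n v hv]
    | inr k =>
      have hx : x k ∈ Φ n := Finset.mem_biUnion.2 ⟨Sum.inr k, hi, by simp⟩
      have hy : y k ∈ Φ n := Finset.mem_biUnion.2 ⟨Sum.inr k, hi, by simp⟩
      show Q n * A k * Q n = A k
      conv_lhs => rw [hA k]
      calc Q n * (lpProj H (y k) * A k * lpProj H (x k)) * Q n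
          = (Q n * lpProj H (y k)) * A k * (lpProj H (x k) * Q n) := by noncomm_ring
        _ = lpProj H (y k) * A k * lpProj H (x k) := by
            rw [hQl n (y k) hy, hQr n (x k) hx]
        _ = A k := (hA k).symm
  -- the filtration
  set B : ℕ → NonUnitalStarSubalgebra ℂ (lp H 2 →L[ℂ] lp H 2) :=
    fun n => adjoin ℂ (g '' (F n : Set (V ⊕ K))) with hB
  have hBmono : Monotone B := by
    intro m n h
    exact adjoin_le ((Set.image_mono (f := g) (hFmono h)).trans (subset_adjoin ℂ _))
  have hBcorner : ∀ n, B n ≤ cornerAlg (Q n) (hQQ n) (hQs n) := by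
    intro n
    apply adjoin_le
    rintro T ⟨i, hi, rfl⟩
    exact hgen n i hi
  have hBsub : ∀ n, (B n : Set (lp H 2 →L[ℂ] lp H 2)) ⊆ 𝔄 := by
    intro n
    have h1 : B n ≤ adjoin ℂ (Set.range (lpProj H) ∪ Set.range A) := by
      apply adjoin_le
      refine (Set.image_subset_range g _).trans ?_
      rw [hrange]
      exact subset_adjoin ℂ _
    have h2 := h1.trans (NonUnitalStarSubalgebra.le_topologicalClosure _)
    rw [h𝔄]
    exact h2
  refine ⟨B, hBmono, ?_, hBsub, ?_⟩
  · -- finite-dimensionality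
    intro n
    -- the finite-dimensional submodule bounding the range of `Q n`
    let W : Submodule ℂ (lp H 2) := (Φ n).sup fun v => LinearMap.range (lpSingleL H v)
    have hW : FiniteDimensional ℂ W := Submodule.finiteDimensional_finset_sup _ _
    have hr : ∀ f, Q n f ∈ W := by
      intro f
      have : Q n f = ∑ v ∈ Φ n, lpProj H v f := by
        simp [Q, ContinuousLinearMap.sum_apply]
      rw [this]
      refine Submodule.sum_mem _ fun v hv => ?_
      have : lpProj H v f ∈ LinearMap.range (lpSingleL H v) := ⟨f v, rfl⟩
      exact Finset.le_sup (f := fun v => LinearMap.range (lpSingleL H v)) hv this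
    have hS : ∀ T ∈ (B n).toNonUnitalSubalgebra.toSubmodule, Q n * T * Q n = T :=
      fun T hT => hBcorner n hT
    have := finiteDimensional_of_corner (Q n) W hr _ hS
    exact Module.Finite.equiv (B n).toNonUnitalSubalgebra.toSubmoduleEquiv
  · -- density
    have hdir : Directed (· ≤ ·) B := hBmono.directed_le
    have hcoe : ((⨆ n, B n : NonUnitalStarSubalgebra ℂ (lp H 2 →L[ℂ] lp H 2)) :
        Set (lp H 2 →L[ℂ] lp H 2)) = ⋃ n, (B n : Set (lp H 2 →L[ℂ] lp H 2)) :=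
      NonUnitalStarSubalgebra.coe_iSup_of_directed hdir
    have hle : adjoin ℂ (Set.range (lpProj H) ∪ Set.range A) ≤ ⨆ n, B n := by
      apply adjoin_le
      rw [← hrange]
      rintro T ⟨i, rfl⟩
      have hmem : g i ∈ B (e i) := subset_adjoin ℂ _ ⟨i, (hF (e i) i).2 le_rfl, rfl⟩
      exact le_iSup B (e i) hmem
    have hcl : (𝔄 : Set (lp H 2 →L[ℂ] lp H 2)) =
        closure ((adjoin ℂ (Set.range (lpProj H) ∪ Set.range A) :
          NonUnitalStarSubalgebra ℂ (lp H 2 →L[ℂ] lp H 2)) : Set (lp H 2 →L[ℂ] lp H 2)) := by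
      rw [h𝔄]; rfl
    apply subset_antisymm
    · apply closure_minimal
      · exact Set.iUnion_subset hBsub
      · rw [hcl]; exact isClosed_closure
    · rw [hcl]
      apply closure_mono
      intro T hT
      rw [← hcoe]
      exact hle hT
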